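/- For every n, every vector v : Fin n → 𝕆 with ∑ⱼ conj(vⱼ)·vⱼ = 1, every λ ∈ 𝕆, and every index i: ∑ⱼ ((vᵢ·λ)·conj(vⱼ))·vⱼ = vᵢ·λ. (That is, ((v·λ)·v†)·v = v·λ for any normalized octonionic vector v and arbitrary octonion λ.) -/

import Mathlib

noncomputable section

open Quaternion

/-- The octonions, realized as the Cayley–Dickson double of the real quaternions:
pairs of quaternions. -/
abbrev 𝕆 : Type := ℍ[ℝ] × ℍ[ℝ]

namespace Octonion

/-- Cayley–Dickson multiplication: `(a, b)·(c, d) = (a·c − conj(d)·b, d·a + b·conj(c))`. -/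
def omul (x y : 𝕆) : 𝕆 :=
  (x.1 * y.1 - star y.2 * x.2, y.2 * x.1 + x.2 * star y.1)

/-- Octonionic conjugation: `conj (a, b) = (conj a, −b)`. -/
def oconj (x : 𝕆) : 𝕆 := (star x.1, -x.2)

/-- The embedding of the reals, `r ↦ (r, 0)`. -/
def oR (r : ℝ) : 𝕆 := ((r : ℍ[ℝ]), 0)

/-- The unit octonion `1 = (1, 0)`. -/
def o1 : 𝕆 := oR 1

/-- The associator `[a,b,c] = (a·b)·c − a·(b·c)`. -/
def oassoc (a b c : 𝕆) : 𝕆 := omul (omul a b) c - omul a (omul b c)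

/-- The inner product: the real number with `(a·conj b + b·conj a)/2 = (a ⋅ b)·1`. -/
def odot (x y : 𝕆) : ℝ := (omul x (oconj y) + omul y (oconj x)).1.re / 2

/-- The squared norm `|x|²`, the real number with `x·conj x = |x|²·1`. -/
def onormSq (x : 𝕆) : ℝ := odot x x

/-- The real part of an octonion, as a real number. -/
def oreR (x : 𝕆) : ℝ := x.1.re

/-- The imaginary part `Im(x) = (x − conj x)/2`. -/
def oIm (x : 𝕆) : 𝕆 := (2:ℝ)⁻¹ • (x - oconj x)

/-- The imaginary units. -/
def oi : 𝕆 := (⟨0,1,0,0⟩, 0)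
def oj : 𝕆 := (⟨0,0,1,0⟩, 0)
def ok : 𝕆 := (⟨0,0,0,1⟩, 0)
def ol : 𝕆 := (0, 1)
def oil : 𝕆 := (0, ⟨0,1,0,0⟩)
def ojl : 𝕆 := (0, ⟨0,0,1,0⟩)
def okl : 𝕆 := (0, ⟨0,0,0,1⟩)

end Octonion


open Octonion

lemma omul_conj_assoc (x a : 𝕆) :
    omul (omul x (oconj a)) a = omul x (omul (oconj a) a) := by
  obtain ⟨p, q⟩ := x
  obtain ⟨c, d⟩ := a
  simp only [omul, oconj, Prod.ext_iff, Quaternion.ext_iff, Quaternion.re_mul,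
    Quaternion.imI_mul, Quaternion.imJ_mul, Quaternion.imK_mul, Quaternion.re_star,
    Quaternion.imI_star, Quaternion.imJ_star, Quaternion.imK_star, Quaternion.re_sub,
    Quaternion.imI_sub, Quaternion.imJ_sub, Quaternion.imK_sub, Quaternion.re_add,
    Quaternion.imI_add, Quaternion.imJ_add, Quaternion.imK_add, Quaternion.re_neg,
    Quaternion.imI_neg, Quaternion.imJ_neg, Quaternion.imK_neg]
  refine ⟨⟨?_, ?_, ?_, ?_⟩, ?_, ?_, ?_, ?_⟩ <;> ring

lemma omul_sum {ι : Type*} (s : Finset ι) (x : 𝕆) (f : ι → 𝕆) :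
    omul x (∑ j ∈ s, f j) = ∑ j ∈ s, omul x (f j) := by
  classical
  induction s using Finset.induction_on with
  | empty => simp [omul]
  | insert _ _ h ih =>
      rw [Finset.sum_insert h, Finset.sum_insert h, ← ih]
      simp only [omul, Prod.ext_iff, Prod.fst_add, Prod.snd_add, star_add]
      constructor <;> noncomm_ring

lemma omul_one (x : 𝕆) : omul x o1 = x := by
  simp [omul, o1, oR]


/-- `((v·λ)·v†)·v = v·λ` for any normalized octonionic vector `v` and
arbitrary octonion `λ`: for every index `i`,
`∑ⱼ ((vᵢ·λ)·conj(vⱼ))·vⱼ = vᵢ·λ`. -/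
theorem outer_product_identity (n : ℕ) (v : Fin n → 𝕆)
    (hnorm : ∑ j, omul (oconj (v j)) (v j) = o1) (lam : 𝕆) (i : Fin n) :
    ∑ j, omul (omul (omul (v i) lam) (oconj (v j))) (v j) = omul (v i) lam := by
  calc ∑ j, omul (omul (omul (v i) lam) (oconj (v j))) (v j)
      = ∑ j, omul (omul (v i) lam) (omul (oconj (v j)) (v j)) := by
        simp only [omul_conj_assoc]
    _ = omul (omul (v i) lam) (∑ j, omul (oconj (v j)) (v j)) := (omul_sum _ _ _).symm
    _ = omul (v i) lam := by rw [hnorm, omul_one]
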